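/- Lidskii's theorem: Let A and B be Hermitian operators on an n-dimensional inner product space. For any indices 1 ≤ i₁ < ⋯ < i_k ≤ n, one has Σ_{j=1}^k λ_{i_j}(A+B) ≤ Σ_{j=1}^k λ_{i_j}(A) + Σ_{j=1}^k λ_j(B), where λ_i(·) denotes the i-th largest eigenvalue. -/

import Mathlib

open Finset

namespace LidskiiAux

noncomputable section

variable {n : ℕ}

abbrev E (n : ℕ) := EuclideanSpace ℂ (Fin n)

/-- `T` acts on the orthonormal basis `w` with real eigenvalues `a`. -/
def HasEigBasis (T : E n →ₗ[ℂ] E n) (w : OrthonormalBasis (Fin n) ℂ (E n))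
    (a : Fin n → ℝ) : Prop := ∀ j, T (w j) = (a j : ℂ) • w j

lemma inner_eig {T : E n →ₗ[ℂ] E n} {w : OrthonormalBasis (Fin n) ℂ (E n)}
    {a : Fin n → ℝ} (h : HasEigBasis T w a) (x : E n) :
    (inner ℂ x (T x) : ℂ) = ∑ i, (a i : ℂ) * ((‖w.repr x i‖ : ℂ))^2 := by
  have hTx : T x = ∑ i, (w.repr x i * (a i : ℂ)) • w i := by
    conv_lhs => rw [← w.sum_repr x]
    rw [map_sum]
    congr 1; funext i
    rw [map_smul, h i, smul_smul]
  rw [hTx, inner_sum]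
  congr 1; funext i
  rw [inner_smul_right, ← inner_conj_symm x (w i), ← OrthonormalBasis.repr_apply_apply]
  rw [mul_comm (w.repr x i), mul_assoc, Complex.mul_conj']

/-- real quadratic form -/
lemma re_inner_eig {T : E n →ₗ[ℂ] E n} {w : OrthonormalBasis (Fin n) ℂ (E n)}
    {a : Fin n → ℝ} (h : HasEigBasis T w a) (x : E n) :
    Complex.re (inner ℂ x (T x) : ℂ) = ∑ i, a i * ‖w.repr x i‖^2 := by
  rw [inner_eig h x]
  rw [Complex.re_sum]
  congr 1; funext i
  norm_cast

lemma norm_sq_eq {w : OrthonormalBasis (Fin n) ℂ (E n)} (x : E n) :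
    ‖x‖^2 = ∑ i, ‖w.repr x i‖^2 := by
  have h1 : HasEigBasis LinearMap.id w (fun _ => (1 : ℝ)) := by
    intro j; simp
  have := re_inner_eig h1 x
  simp only [LinearMap.id_apply, one_mul] at this
  rw [← this, ← @inner_self_eq_norm_sq ℂ]
  rfl

end
end LidskiiAux

namespace LidskiiAux
noncomputable section
variable {n : ℕ}

lemma apply_eig {T : E n →ₗ[ℂ] E n} {w : OrthonormalBasis (Fin n) ℂ (E n)}
    {a : Fin n → ℝ} (h : HasEigBasis T w a) (x : E n) :
    T x = ∑ i, (w.repr x i * (a i : ℂ)) • w i := by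
  conv_lhs => rw [← w.sum_repr x]
  rw [map_sum]
  congr 1; funext i
  rw [map_smul, h i, smul_smul]

lemma isSymmetric_of_eig {T : E n →ₗ[ℂ] E n} {w : OrthonormalBasis (Fin n) ℂ (E n)}
    {a : Fin n → ℝ} (h : HasEigBasis T w a) : T.IsSymmetric := by
  intro x y
  rw [apply_eig h x, apply_eig h y, sum_inner, inner_sum]
  congr 1; funext i
  rw [inner_smul_left, inner_smul_right, ← OrthonormalBasis.repr_apply_apply,
    ← inner_conj_symm x (w i), ← OrthonormalBasis.repr_apply_apply]
  simp only [map_mul, Complex.conj_ofReal]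
  ring

lemma shift_eig {T : E n →ₗ[ℂ] E n} {w : OrthonormalBasis (Fin n) ℂ (E n)}
    {a : Fin n → ℝ} (h : HasEigBasis T w a) (t : ℝ) :
    HasEigBasis (T + (t : ℂ) • LinearMap.id) w (fun j => a j + t) := by
  intro j
  simp [h j, add_smul]

lemma exists_eiglist (T : E n →ₗ[ℂ] E n) (hT : T.IsSymmetric) :
    ∃ (w : OrthonormalBasis (Fin n) ℂ (E n)) (d : Fin n → ℝ),
      Antitone d ∧ HasEigBasis T w d := by
  have hn : Module.finrank ℂ (E n) = n := finrank_euclideanSpace_fin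
  set v := hT.eigenvectorBasis hn
  set f := hT.eigenvalues hn with hf
  set σ := Tuple.sort (fun i => -f i) with hσ
  refine ⟨v.reindex σ.symm, f ∘ σ, ?_, ?_⟩
  · intro i j hij
    have := Tuple.monotone_sort (fun i => -f i) hij
    simpa using this
  · intro j
    have : (v.reindex σ.symm) j = v (σ j) := by
      rw [OrthonormalBasis.reindex_apply, Equiv.symm_symm]
    rw [this]
    exact hT.apply_eigenvectorBasis hn (σ j)

lemma repr_eq_zero_of_mem_span {w : OrthonormalBasis (Fin n) ℂ (E n)} {S : Set (Fin n)}
    {x : E n} (hx : x ∈ Submodule.span ℂ (w '' S)) {j : Fin n} (hj : j ∉ S) :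
    w.repr x j = 0 := by
  rw [OrthonormalBasis.repr_apply_apply]
  induction hx using Submodule.span_induction with
  | mem z hz =>
    obtain ⟨i, hi, rfl⟩ := hz
    exact w.orthonormal.2 (fun h => hj (h ▸ hi))
  | zero => simp
  | add _ _ _ _ h1 h2 => rw [inner_add_right, h1, h2, add_zero]
  | smul c _ _ h1 => rw [inner_smul_right, h1, mul_zero]

lemma finrank_span_onb (w : OrthonormalBasis (Fin n) ℂ (E n)) (S : Finset (Fin n)) :
    Module.finrank ℂ (Submodule.span ℂ (w '' ↑S)) = S.card := by
  classical
  have hw : LinearIndependent ℂ w := w.orthonormal.linearIndependent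
  have hinj : Function.Injective w := hw.injective
  have hli : LinearIndependent ℂ (fun i : (↑S : Set (Fin n)) => w i) :=
    hw.comp _ Subtype.coe_injective
  have hrange : Set.range (fun i : (↑S : Set (Fin n)) => w i) = w '' ↑S := by
    rw [← Set.image_eq_range]
  have hli2 : LinearIndependent ℂ (Subtype.val : (w '' ↑S) → E n) := by
    rw [← hrange]
    exact (linearIndepOn_id_range_iff hli.injective).mpr hli
  rw [finrank_span_set_eq_card hli2]
  rw [Set.toFinset_image]
  rw [Finset.card_image_of_injective _ hinj]
  simp

end
end LidskiiAux

namespace LidskiiAux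
noncomputable section
variable {n : ℕ}

lemma rayleigh_lower {T : E n →ₗ[ℂ] E n} {w : OrthonormalBasis (Fin n) ℂ (E n)}
    {a : Fin n → ℝ} (h : HasEigBasis T w a) (hA : Antitone a) (i : Fin n)
    {x : E n} (hx : x ∈ Submodule.span ℂ (w '' {j | j ≤ i})) :
    a i * ‖x‖^2 ≤ Complex.re (inner ℂ x (T x) : ℂ) := by
  rw [re_inner_eig h x, norm_sq_eq (w := w) x, Finset.mul_sum]
  apply Finset.sum_le_sum
  intro j _
  by_cases hj : j ≤ i
  · exact mul_le_mul_of_nonneg_right (hA hj) (by positivity)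
  · rw [repr_eq_zero_of_mem_span hx (by simpa using hj)]
    simp

lemma rayleigh_upper {T : E n →ₗ[ℂ] E n} {w : OrthonormalBasis (Fin n) ℂ (E n)}
    {a : Fin n → ℝ} (h : HasEigBasis T w a) (hA : Antitone a) (i : Fin n)
    {x : E n} (hx : x ∈ Submodule.span ℂ (w '' {j | i ≤ j})) :
    Complex.re (inner ℂ x (T x) : ℂ) ≤ a i * ‖x‖^2 := by
  rw [re_inner_eig h x, norm_sq_eq (w := w) x, Finset.mul_sum]
  apply Finset.sum_le_sum
  intro j _
  by_cases hj : i ≤ j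
  · exact mul_le_mul_of_nonneg_right (hA hj) (by positivity)
  · rw [repr_eq_zero_of_mem_span hx (by simpa using hj)]
    simp

lemma eig_mono {T T' : E n →ₗ[ℂ] E n} {w w' : OrthonormalBasis (Fin n) ℂ (E n)}
    {a a' : Fin n → ℝ} (h : HasEigBasis T w a) (h' : HasEigBasis T' w' a')
    (hA : Antitone a) (hA' : Antitone a')
    (hq : ∀ x, Complex.re (inner ℂ x (T x) : ℂ) ≤ Complex.re (inner ℂ x (T' x) : ℂ))
    (i : Fin n) : a i ≤ a' i := by
  classical
  set U := Submodule.span ℂ (w '' {j | j ≤ i}) with hUdef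
  set V := Submodule.span ℂ (w' '' {j | i ≤ j}) with hVdef
  have hU : Module.finrank ℂ U = (i : ℕ) + 1 := by
    have hs : ({j | j ≤ i} : Set (Fin n)) = ↑(Finset.Iic i) := by ext j; simp
    rw [hUdef, hs, finrank_span_onb, Fin.card_Iic]
  have hV : Module.finrank ℂ V = n - (i : ℕ) := by
    have hs : ({j | i ≤ j} : Set (Fin n)) = ↑(Finset.Ici i) := by ext j; simp
    rw [hVdef, hs, finrank_span_onb, Fin.card_Ici]
  have hne : U ⊓ V ≠ ⊥ := by
    intro hbot
    have h1 := Submodule.finrank_sup_add_finrank_inf_eq U V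
    rw [hbot, finrank_bot] at h1
    have h2 : Module.finrank ℂ ↥(U ⊔ V) ≤ n := by
      have := Submodule.finrank_le (U ⊔ V)
      rwa [finrank_euclideanSpace_fin] at this
    have h3 : (i : ℕ) < n := i.isLt
    omega
  obtain ⟨x, hxUV, hx0⟩ := Submodule.exists_mem_ne_zero_of_ne_bot hne
  have hxU : x ∈ U := hxUV.1
  have hxV : x ∈ V := hxUV.2
  have hb1 := rayleigh_lower h hA i hxU
  have hb2 := rayleigh_upper h' hA' i hxV
  have hx2 : (0:ℝ) < ‖x‖^2 := by
    have : (0:ℝ) < ‖x‖ := norm_pos_iff.mpr hx0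
    positivity
  have := le_trans hb1 (le_trans (hq x) hb2)
  exact le_of_mul_le_mul_right (by linarith) hx2

lemma sum_eig_eq_trace {T : E n →ₗ[ℂ] E n} {w : OrthonormalBasis (Fin n) ℂ (E n)}
    {a : Fin n → ℝ} (h : HasEigBasis T w a) :
    (∑ i, (a i : ℂ)) = LinearMap.trace ℂ (E n) T := by
  classical
  rw [LinearMap.trace_eq_matrix_trace ℂ w.toBasis T, Matrix.trace]
  apply Finset.sum_congr rfl
  intro i _
  rw [Matrix.diag_apply, LinearMap.toMatrix_apply, OrthonormalBasis.coe_toBasis, h i,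
    map_smul]
  have hwi : w i = w.toBasis i := by rw [OrthonormalBasis.coe_toBasis]
  rw [hwi, Module.Basis.repr_self]
  simp

lemma q_add (T S : E n →ₗ[ℂ] E n) (x : E n) :
    Complex.re (inner ℂ x ((T + S) x) : ℂ)
      = Complex.re (inner ℂ x (T x) : ℂ) + Complex.re (inner ℂ x (S x) : ℂ) := by
  rw [LinearMap.add_apply, inner_add_right]
  simp

lemma q_mono_of_pointwise {S S' : E n →ₗ[ℂ] E n} {u : OrthonormalBasis (Fin n) ℂ (E n)}
    {b b' : Fin n → ℝ} (h : HasEigBasis S u b) (h' : HasEigBasis S' u b')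
    (hle : ∀ j, b j ≤ b' j) (x : E n) :
    Complex.re (inner ℂ x (S x) : ℂ) ≤ Complex.re (inner ℂ x (S' x) : ℂ) := by
  rw [re_inner_eig h x, re_inner_eig h' x]
  apply Finset.sum_le_sum
  intro j _
  exact mul_le_mul_of_nonneg_right (hle j) (by positivity)

lemma hasEigBasis_toEuclideanLin {A : Matrix (Fin n) (Fin n) ℂ} (hA : A.IsHermitian)
    (σ : Equiv.Perm (Fin n)) :
    HasEigBasis (Matrix.toEuclideanLin A) (hA.eigenvectorBasis.reindex σ.symm)
      (hA.eigenvalues ∘ σ) := by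
  intro j
  rw [OrthonormalBasis.reindex_apply, Equiv.symm_symm]
  have h2 := hA.mulVec_eigenvectorBasis (σ j)
  apply (WithLp.equiv 2 (Fin n → ℂ)).injective
  rw [WithLp.equiv_apply, WithLp.equiv_apply, Matrix.piLp_ofLp_toEuclideanLin]
  rw [Matrix.toLin'_apply]
  rw [h2]
  funext i
  simp [Function.comp, Complex.real_smul]

end
end LidskiiAux

/-- `μ` is the listing, in nonincreasing order, of the eigenvalues (with multiplicity)
of the Hermitian matrix `A`. -/
def IsEigListDesc {n : ℕ} (A : Matrix (Fin n) (Fin n) ℂ) (hA : A.IsHermitian)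
    (μ : Fin n → ℝ) : Prop :=
  Antitone μ ∧ ∃ σ : Equiv.Perm (Fin n), μ = hA.eigenvalues ∘ σ

open LidskiiAux in
/-- Lidskii's theorem: for Hermitian `A`, `B` and any indices `i₁ < ⋯ < i_k`,
`Σ_j λ_{i_j}(A+B) ≤ Σ_j λ_{i_j}(A) + Σ_{j=1}^k λ_j(B)`. -/
theorem lidskii {n : ℕ} (A B : Matrix (Fin n) (Fin n) ℂ)
    (hA : A.IsHermitian) (hB : B.IsHermitian)
    (a b c : Fin n → ℝ)
    (ha : IsEigListDesc A hA a) (hb : IsEigListDesc B hB b)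
    (hc : IsEigListDesc (A + B) (hA.add hB) c)
    (k : ℕ) (hk : k ≤ n) (idx : Fin k → Fin n) (hidx : StrictMono idx) :
    ∑ j : Fin k, c (idx j) ≤
      ∑ j : Fin k, a (idx j) + ∑ j : Fin k, b (Fin.castLE hk j) := by
  classical
  rcases Nat.eq_zero_or_pos k with hk0 | hkpos
  · subst hk0; simp
  obtain ⟨haA, σa, hae⟩ := ha
  obtain ⟨hbA, σb, hbe⟩ := hb
  obtain ⟨hcA, σc, hce⟩ := hc
  set TA := Matrix.toEuclideanLin A with hTAdef
  set TB := Matrix.toEuclideanLin B with hTBdef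
  set u := hB.eigenvectorBasis.reindex σb.symm with hudef
  have hTa : HasEigBasis TA (hA.eigenvectorBasis.reindex σa.symm) a := by
    rw [hae]; exact hasEigBasis_toEuclideanLin hA σa
  have hTb : HasEigBasis TB u b := by
    rw [hbe]; exact hasEigBasis_toEuclideanLin hB σb
  have hTc : HasEigBasis (TA + TB) ((hA.add hB).eigenvectorBasis.reindex σc.symm) c := by
    have h0 := hasEigBasis_toEuclideanLin (hA.add hB) σc
    rw [map_add] at h0
    rw [hce]; exact h0
  have hk1 : k - 1 < k := by omega
  set K : Fin n := Fin.castLE hk ⟨k - 1, hk1⟩ with hKdef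
  set t := b K with htdef
  set ep : Fin n → ℝ := fun j => max (b j - t) 0 with hepdef
  set Sp : E n →ₗ[ℂ] E n := u.toBasis.constr ℂ (fun j => (ep j : ℂ) • u j) with hSpdef
  have hSp : HasEigBasis Sp u ep := by
    intro j
    have hj : u.toBasis j = u j := by rw [OrthonormalBasis.coe_toBasis]
    rw [← hj, hSpdef, Module.Basis.constr_basis, hj]
  set M := TA + Sp with hMdef
  set Idn : E n →ₗ[ℂ] E n := LinearMap.id with hIdef
  have hMsym : M.IsSymmetric := (isSymmetric_of_eig hTa).add (isSymmetric_of_eig hSp)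
  obtain ⟨v, d, hdA, hMd⟩ := exists_eiglist M hMsym
  have hMt : HasEigBasis (M + (t : ℂ) • Idn) v (fun j => d j + t) := shift_eig hMd t
  have hdtA : Antitone (fun j => d j + t) := fun i j hij => by
    have := hdA hij; dsimp; linarith
  have hq1 : ∀ x, Complex.re (inner ℂ x ((TA + TB) x) : ℂ)
      ≤ Complex.re (inner ℂ x ((M + (t : ℂ) • Idn) x) : ℂ) := by
    intro x
    have hB' : HasEigBasis (Sp + (t : ℂ) • Idn) u (fun j => ep j + t) :=
      shift_eig hSp t
    have h1 : Complex.re (inner ℂ x (TB x) : ℂ)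
        ≤ Complex.re (inner ℂ x ((Sp + (t : ℂ) • Idn) x) : ℂ) := by
      refine q_mono_of_pointwise hTb hB' (fun j => ?_) x
      have := le_max_left (b j - t) (0:ℝ)
      dsimp [ep]; linarith
    have hrw : M + (t : ℂ) • Idn = TA + (Sp + (t : ℂ) • Idn) := by
      rw [hMdef, add_assoc]
    rw [hrw, q_add, q_add]
    linarith
  have hcd : ∀ i, c i ≤ d i + t := fun i => eig_mono hTc hMt hcA hdtA hq1 i
  have hq2 : ∀ x, Complex.re (inner ℂ x (TA x) : ℂ) ≤ Complex.re (inner ℂ x (M x) : ℂ) := by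
    intro x
    have h0 : (0:ℝ) ≤ Complex.re (inner ℂ x (Sp x) : ℂ) := by
      rw [re_inner_eig hSp x]
      apply Finset.sum_nonneg
      intro j _
      have h1 : (0:ℝ) ≤ ep j := le_max_right _ _
      positivity
    rw [hMdef, q_add]
    linarith
  have had : ∀ i, a i ≤ d i := fun i => eig_mono hTa hMd haA hdA hq2 i
  -- trace identity
  have htr : ∑ i, d i = ∑ i, a i + ∑ i, ep i := by
    have h1 := sum_eig_eq_trace hMd
    have h2 := sum_eig_eq_trace hTa
    have h3 := sum_eig_eq_trace hSp
    rw [hMdef, map_add, ← h2, ← h3] at h1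
    have h4 : ((∑ i, d i : ℝ) : ℂ) = ((∑ i, a i + ∑ i, ep i : ℝ) : ℂ) := by
      push_cast
      rw [h1]
    exact_mod_cast h4
  -- sum of ep
  have hKval : (K : ℕ) = k - 1 := rfl
  have hepsum : ∑ i, ep i = (∑ j : Fin k, b (Fin.castLE hk j)) - k * t := by
    have hbK : ∀ j : Fin n, j ≤ K → ep j = b j - t := by
      intro j hj
      have h5 : t ≤ b j := hbA hj
      dsimp [ep]
      rw [max_eq_left (by linarith)]
    have hbK' : ∀ j : Fin n, ¬ j ≤ K → ep j = 0 := by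
      intro j hj
      have h5 : K ≤ j := le_of_lt (lt_of_not_ge hj)
      have h6 : b j ≤ t := hbA h5
      dsimp [ep]
      rw [max_eq_right (by linarith)]
    have h5 : ∑ i, ep i = ∑ i ∈ Finset.Iic K, (b i - t) := by
      rw [← Finset.sum_subset (Finset.subset_univ (Finset.Iic K))
        (fun i _ hi => hbK' i (fun h => hi (Finset.mem_Iic.mpr h)))]
      exact Finset.sum_congr rfl (fun i hi => hbK i (Finset.mem_Iic.mp hi))
    have himg : Finset.Iic K = Finset.image (Fin.castLE hk) Finset.univ := by
      ext j
      simp only [Finset.mem_Iic, Finset.mem_image, Finset.mem_univ, true_and]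
      constructor
      · intro hj
        have hjv : (j : ℕ) ≤ k - 1 := by
          have := hj
          rwa [Fin.le_def, hKval] at this
        refine ⟨⟨(j : ℕ), by omega⟩, ?_⟩
        apply Fin.ext
        simp
      · rintro ⟨i, rfl⟩
        rw [Fin.le_def, hKval]
        simp only [Fin.coe_castLE]
        omega
    have hcard : (Finset.Iic K).card = k := by
      rw [Fin.card_Iic, hKval]
      omega
    rw [h5, Finset.sum_sub_distrib, Finset.sum_const, hcard, nsmul_eq_mul, himg,
      Finset.sum_image (fun x _ y _ h => Fin.castLE_injective hk h)]
  -- subset sum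
  have hsub : ∑ j : Fin k, (d (idx j) - a (idx j)) ≤ ∑ i, (d i - a i) := by
    have himg2 : ∑ i ∈ Finset.image idx Finset.univ, (d i - a i)
        = ∑ j : Fin k, (d (idx j) - a (idx j)) :=
      Finset.sum_image (fun x _ y _ h => hidx.injective h)
    rw [← himg2]
    apply Finset.sum_le_sum_of_subset_of_nonneg (Finset.subset_univ _)
    intro i _ _
    have := had i
    linarith
  have e1 : ∑ j : Fin k, c (idx j) ≤ ∑ j : Fin k, d (idx j) + k * t := by
    have h6 : ∑ j : Fin k, c (idx j) ≤ ∑ j : Fin k, (d (idx j) + t) :=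
      Finset.sum_le_sum (fun j _ => hcd (idx j))
    rw [Finset.sum_add_distrib, Finset.sum_const, Finset.card_univ, Fintype.card_fin,
      nsmul_eq_mul] at h6
    exact h6
  have e2 : ∑ j : Fin k, d (idx j) - ∑ j : Fin k, a (idx j) ≤ ∑ i, d i - ∑ i, a i := by
    rw [← Finset.sum_sub_distrib, ← Finset.sum_sub_distrib]
    exact hsub
  linarith [e1, e2, htr, hepsum]
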